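/- Let n ≥ 1 and let g : ℝⁿ → ℝⁿ be a continuous open map. Let x ∈ ℝⁿ, δ > 0 and S > 0 be such that ‖g(y)‖ > S for every y on the sphere {y : ‖y − x‖ = δ}, while ‖g(x)‖ < S. Then the open ball B(0, S) is contained in g(B(x, δ)). -/

import Mathlib

open Filter Metric Set

/-- The escaping set `I(f)` of a map `f : ℝⁿ → ℝⁿ`:
points whose orbit under iteration tends to infinity. -/
def escapingSet {n : ℕ} (f : EuclideanSpace ℝ (Fin n) → EuclideanSpace ℝ (Fin n)) :
    Set (EuclideanSpace ℝ (Fin n)) :=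
  {x | Tendsto (fun k => ‖f^[k] x‖) atTop atTop}

/-- `f` satisfies the growth condition with constant `R' > 0` if
`‖f x‖ > 2‖x‖` whenever `‖x‖ > R'`. -/
def GrowthCondition {n : ℕ} (f : EuclideanSpace ℝ (Fin n) → EuclideanSpace ℝ (Fin n))
    (R' : ℝ) : Prop :=
  ∀ x, R' < ‖x‖ → 2 * ‖x‖ < ‖f x‖

theorem stmt_13 (n : ℕ) (hn : 1 ≤ n)
    (g : EuclideanSpace ℝ (Fin n) → EuclideanSpace ℝ (Fin n))
    (hg : Continuous g) (hopen : IsOpenMap g)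
    (x : EuclideanSpace ℝ (Fin n)) (δ S : ℝ) (hδ : 0 < δ) (hS : 0 < S)
    (hsphere : ∀ y : EuclideanSpace ℝ (Fin n), ‖y - x‖ = δ → S < ‖g y‖)
    (hx : ‖g x‖ < S) :
    Metric.ball (0 : EuclideanSpace ℝ (Fin n)) S ⊆ g '' Metric.ball x δ := by
  set U := g '' Metric.ball x δ with hU
  have hUopen : IsOpen U := hopen _ isOpen_ball
  have hKc : IsCompact (g '' Metric.closedBall x δ) :=
    (isCompact_closedBall x δ).image hg
  have hclos : closure U ⊆ g '' Metric.closedBall x δ :=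
    closure_minimal (image_mono ball_subset_closedBall) hKc.isClosed
  have hne : (Metric.ball (0 : EuclideanSpace ℝ (Fin n)) S ∩ U).Nonempty := by
    refine ⟨g x, ?_, ⟨x, mem_ball_self hδ, rfl⟩⟩
    simpa [mem_ball, dist_eq_norm] using hx
  have hsub : closure U ∩ Metric.ball (0 : EuclideanSpace ℝ (Fin n)) S ⊆ U := by
    rintro z ⟨hz, hzB⟩
    obtain ⟨y, hy, rfl⟩ := hclos hz
    rcases lt_or_eq_of_le (mem_closedBall.mp hy) with h | h
    · exact ⟨y, mem_ball.mpr h, rfl⟩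
    · have h1 : S < ‖g y‖ := hsphere y (by rwa [dist_eq_norm] at h)
      have h2 : ‖g y‖ < S := by simpa [mem_ball, dist_eq_norm] using hzB
      exact absurd h1 (not_lt.mpr h2.le)
  exact IsPreconnected.subset_of_closure_inter_subset
    (convex_ball (0 : EuclideanSpace ℝ (Fin n)) S).isPreconnected hUopen hne hsub
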